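/- arXiv:2409.17966 — 3 statements merged into one kernel-verified Lean document; each statement's English description precedes it below -/
import Mathlib

section
/- Let f be a probability mass function on the positive integers, F̄(d) = ∑_{m>d} f(m), fix K ∈ ℕ, and set w = ∑_{d=0}^{K} F̄(d). Let D be a random variable with P(D = d) = F̄(d)/w for d ∈ {0,1,…,K}, independent of an i.i.d. sequence Y₁, Y₂, … with pmf f, and let R = {D + Y₁ + ⋯ + Y_j : j ≥ 0} (the j = 0 term being D). Then for every integer m with 1 ≤ m ≤ K, P(R ∩ {1,…,m} ≠ ∅) = (∑_{j=0}^{m−1} F̄(j)) / w. -/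
open MeasureTheory ProbabilityTheory Finset

/-- Stationary-delayed renewal set: the delay `D = Z 0` has distribution `F̄(d)/w` on
`{0,…,K}`, the gaps `Y_i = Z (i+1)` are i.i.d. with pmf `f`, all independent, and
`R = {D + Y₁ + ⋯ + Y_j : j ≥ 0}`. Then for every `1 ≤ m ≤ K`,
`P(R ∩ {1,…,m} ≠ ∅) = (∑_{j=0}^{m−1} F̄(j)) / w`. -/
theorem stmt_9 {Ω : Type*} [MeasurableSpace Ω] (P : Measure Ω) [IsProbabilityMeasure P]
    (f : ℕ → ℝ) (hf_nonneg : ∀ k, 0 ≤ f k) (hf0 : f 0 = 0) (hf_sum : HasSum f 1)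
    (Fbar : ℕ → ℝ) (hFbar : ∀ d, Fbar d = ∑' m : ℕ, if d < m then f m else 0)
    (K : ℕ) (w : ℝ) (hw : w = ∑ d ∈ range (K + 1), Fbar d)
    (Z : ℕ → Ω → ℕ) (hZ : ∀ i, Measurable (Z i))
    (hindep : iIndepFun Z P)
    (hD : ∀ d : ℕ, d ≤ K → (P {ω | Z 0 ω = d}).toReal = Fbar d / w)
    (hDsupp : ∀ᵐ ω ∂P, Z 0 ω ≤ K)
    (hY : ∀ i k : ℕ, (P {ω | Z (i + 1) ω = k}).toReal = f k)
    (m : ℕ) (hm : 1 ≤ m) (hmK : m ≤ K) :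
    (P {ω | ∃ k : ℕ, 1 ≤ k ∧ k ≤ m ∧
        ∃ j : ℕ, Z 0 ω + ∑ i ∈ range j, Z (i + 1) ω = k}).toReal
      = (∑ j ∈ range m, Fbar j) / w := by
  have hf_summ : Summable f := hf_sum.summable
  -- nonnegativity and basic facts about Fbar
  have hFbar_nonneg : ∀ d, 0 ≤ Fbar d := by
    intro d; rw [hFbar]
    exact tsum_nonneg fun k => by by_cases h : d < k <;> simp [h, hf_nonneg k]
  have hg_summ : ∀ d, Summable (fun k => if d < k then f k else 0) := by
    intro d
    refine hf_summ.of_nonneg_of_le (fun k => ?_) (fun k => ?_)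
    · by_cases h : d < k <;> simp [h, hf_nonneg k]
    · by_cases h : d < k <;> simp [h, hf_nonneg k]
  have hFbar0 : Fbar 0 = 1 := by
    rw [hFbar]
    have : ∀ k : ℕ, (if 0 < k then f k else 0) = f k := by
      intro k
      rcases Nat.eq_zero_or_pos k with h | h
      · simp [h, hf0]
      · simp [h]
    rw [tsum_congr this, hf_sum.tsum_eq]
  -- partial sums of f in terms of Fbar
  have hpartial : ∀ d : ℕ, ∑ k ∈ range (d + 1), f k = 1 - Fbar d := by
    intro d
    have h1 : ∑ k ∈ range (d + 1), f k + ∑' k : ℕ, f (k + (d + 1)) = 1 := by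
      rw [Summable.sum_add_tsum_nat_add (d + 1) hf_summ, hf_sum.tsum_eq]
    have h2 : Fbar d = ∑' k : ℕ, f (k + (d + 1)) := by
      rw [hFbar]
      have h3 : ∑ k ∈ range (d + 1), (if d < k then f k else 0) +
          ∑' k : ℕ, (if d < k + (d + 1) then f (k + (d + 1)) else 0)
          = ∑' k : ℕ, (if d < k then f k else 0) :=
        Summable.sum_add_tsum_nat_add (d + 1) (hg_summ d)
      have h4 : ∑ k ∈ range (d + 1), (if d < k then f k else 0) = 0 := by
        refine Finset.sum_eq_zero fun k hk => ?_
        rw [Finset.mem_range] at hk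
        simp [Nat.not_lt.mpr (Nat.lt_succ_iff.mp hk)]
      have h5 : ∀ k : ℕ, (if d < k + (d + 1) then f (k + (d + 1)) else 0) = f (k + (d + 1)) := by
        intro k; simp [Nat.lt_add_left]
      rw [h4, zero_add, tsum_congr h5] at h3
      rw [h3]
    linarith
  have hw_pos : 0 < w := by
    have h1 : Fbar 0 ≤ ∑ d ∈ range (K + 1), Fbar d :=
      Finset.single_le_sum (fun i _ => hFbar_nonneg i) (Finset.mem_range.mpr (Nat.succ_pos K))
    rw [hw]; rw [hFbar0] at h1; linarith
  -- measurability of elementary sets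
  have hmeasZ : ∀ i d : ℕ, MeasurableSet {ω | Z i ω = d} := fun i d =>
    (hZ i) (measurableSet_singleton d)
  -- Y_i ≥ 1 a.s.
  have hY0 : ∀ i : ℕ, P {ω | Z (i + 1) ω = 0} = 0 := by
    intro i
    have h := hY i 0
    rw [hf0] at h
    exact ((ENNReal.toReal_eq_zero_iff _).mp h).resolve_right (measure_ne_top P _)
  have hpos : ∀ᵐ ω ∂P, ∀ i : ℕ, 1 ≤ Z (i + 1) ω := by
    rw [ae_all_iff]
    intro i
    have : {ω | ¬ 1 ≤ Z (i + 1) ω} = {ω | Z (i + 1) ω = 0} := by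
      ext ω; simp [Nat.lt_one_iff]
    exact ae_iff.mpr (by rw [this]; exact hY0 i)
  -- the two simpler events
  set A : Set Ω := {ω | ∃ k : ℕ, 1 ≤ k ∧ k ≤ m ∧
      ∃ j : ℕ, Z 0 ω + ∑ i ∈ range j, Z (i + 1) ω = k} with hA
  set B1 : Set Ω := ⋃ i ∈ range m, {ω | Z 0 ω = i + 1} with hB1
  set B2 : Set Ω := {ω | Z 0 ω = 0} ∩ {ω | Z 1 ω ≤ m} with hB2
  -- a.e. equality of events
  have hAB : A =ᵐ[P] ((B1 ∪ B2 : Set Ω)) := by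
    refine Filter.eventuallyEq_set.mpr ?_
    filter_upwards [hpos] with ω hω
    constructor
    · rintro ⟨k, hk1, hkm, j, hsum⟩
      rcases Nat.eq_zero_or_pos (Z 0 ω) with h0 | h0
      · -- delay is 0 : use Y₁
        right
        refine ⟨h0, ?_⟩
        have hj : 1 ≤ j := by
          rcases Nat.eq_zero_or_pos j with hj0 | hj0
          · exfalso; rw [hj0] at hsum; simp [h0] at hsum; omega
          · exact hj0
        have hle : Z 1 ω ≤ ∑ i ∈ range j, Z (i + 1) ω := by
          have := Finset.single_le_sum (f := fun i => Z (i + 1) ω)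
            (fun i _ => Nat.zero_le _) (Finset.mem_range.mpr hj)
          simpa using this
        simp only [Set.mem_setOf_eq]
        omega
      · -- delay is positive : it lies in [1, m]
        left
        have hle : Z 0 ω ≤ k := by omega
        refine Set.mem_biUnion (Finset.mem_coe.mpr (Finset.mem_range.mpr ?_))
          (show Z 0 ω = (Z 0 ω - 1) + 1 by omega)
        omega
    · rintro (h | h)
      · rcases Set.mem_iUnion₂.mp h with ⟨i, hi, hZi⟩
        rw [Finset.mem_range] at hi
        exact ⟨i + 1, Nat.succ_le_succ (Nat.zero_le i), by omega,
          0, by simpa using hZi⟩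
      · obtain ⟨h0, h1⟩ := h
        refine ⟨Z 1 ω, hω 0, h1, 1, ?_⟩
        simp only [Set.mem_setOf_eq] at h0
        simp [h0]
  -- measurability
  have hmeasB1 : MeasurableSet B1 :=
    Finset.measurableSet_biUnion _ (fun i _ => hmeasZ 0 (i + 1))
  have hmeasIic : MeasurableSet {ω | Z 1 ω ≤ m} := (hZ 1) measurableSet_Iic
  have hmeasB2 : MeasurableSet B2 := (hmeasZ 0 0).inter hmeasIic
  -- disjointness of B1 and B2
  have hdisj : Disjoint B1 B2 := by
    rw [Set.disjoint_left]
    intro ω hω1 hω2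
    rcases Set.mem_iUnion₂.mp hω1 with ⟨i, _, hZi⟩
    have h0 : Z 0 ω = 0 := hω2.1
    simp only [Set.mem_setOf_eq] at hZi
    omega
  -- P B1
  have hdisjB1 : (↑(range m) : Set ℕ).PairwiseDisjoint (fun i => {ω | Z 0 ω = i + 1}) := by
    intro i _ j _ hij
    rw [Function.onFun, Set.disjoint_left]
    intro ω h1 h2
    simp only [Set.mem_setOf_eq] at h1 h2
    omega
  have hPB1 : (P B1).toReal = ∑ i ∈ range m, Fbar (i + 1) / w := by
    rw [hB1, measure_biUnion_finset hdisjB1 (fun i _ => hmeasZ 0 (i + 1)),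
      ENNReal.toReal_sum (fun i _ => measure_ne_top P _)]
    refine Finset.sum_congr rfl fun i hi => ?_
    rw [Finset.mem_range] at hi
    exact hD (i + 1) (by omega)
  -- P B2 via independence
  have hind01 : IndepFun (Z 0) (Z 1) P := hindep.indepFun (show (0 : ℕ) ≠ 1 by norm_num)
  have hPB2mul : P B2 = P {ω | Z 0 ω = 0} * P {ω | Z 1 ω ≤ m} := by
    have h := hind01.measure_inter_preimage_eq_mul ({0} : Set ℕ) (Set.Iic m)
      (measurableSet_singleton 0) measurableSet_Iic
    have e1 : Z 0 ⁻¹' ({0} : Set ℕ) = {ω | Z 0 ω = 0} := by ext ω; simp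
    have e2 : Z 1 ⁻¹' (Set.Iic m) = {ω | Z 1 ω ≤ m} := by ext ω; simp [Set.mem_Iic]
    rw [e1, e2] at h
    rw [hB2, h]
  -- P (Z 1 ≤ m)
  have hPle : (P {ω | Z 1 ω ≤ m}).toReal = 1 - Fbar m := by
    have hU : {ω | Z 1 ω ≤ m} = ⋃ k ∈ range (m + 1), {ω | Z 1 ω = k} := by
      ext ω
      simp only [Set.mem_setOf_eq, Set.mem_iUnion, Finset.mem_range, exists_prop]
      constructor
      · intro h; exact ⟨Z 1 ω, by omega, rfl⟩
      · rintro ⟨k, hk, hke⟩; omega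
    have hpd : (↑(range (m + 1)) : Set ℕ).PairwiseDisjoint (fun k => {ω | Z 1 ω = k}) := by
      intro i _ j _ hij
      rw [Function.onFun, Set.disjoint_left]
      intro ω h1 h2
      simp only [Set.mem_setOf_eq] at h1 h2
      omega
    rw [hU, measure_biUnion_finset hpd (fun k _ => hmeasZ 1 k),
      ENNReal.toReal_sum (fun k _ => measure_ne_top P _)]
    have : ∀ k ∈ range (m + 1), (P {ω | Z 1 ω = k}).toReal = f k := fun k _ => hY 0 k
    rw [Finset.sum_congr rfl this, hpartial m]
  have hPB2 : (P B2).toReal = (1 / w) * (1 - Fbar m) := by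
    rw [hPB2mul, ENNReal.toReal_mul, hPle]
    have := hD 0 (Nat.zero_le K)
    rw [this, hFbar0]
  -- put it together
  have hPA : P A = P (B1 ∪ B2) := measure_congr hAB
  have hPunion : (P (B1 ∪ B2)).toReal = (P B1).toReal + (P B2).toReal := by
    rw [measure_union hdisj hmeasB2,
      ENNReal.toReal_add (measure_ne_top P _) (measure_ne_top P _)]
  have hsum_shift : ∑ i ∈ range m, Fbar (i + 1)
      = ∑ j ∈ range m, Fbar j + Fbar m - 1 := by
    have h1 := Finset.sum_range_succ' Fbar m
    have h2 := Finset.sum_range_succ Fbar m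
    rw [hFbar0] at h1
    linarith
  calc (P A).toReal = (P B1).toReal + (P B2).toReal := by rw [hPA, hPunion]
    _ = ∑ i ∈ range m, Fbar (i + 1) / w + (1 / w) * (1 - Fbar m) := by rw [hPB1, hPB2]
    _ = (∑ j ∈ range m, Fbar j) / w := by
        rw [← Finset.sum_div, hsum_shift]
        field_simp
        ring
end

section
/- Let α ∈ (0,1) and let Γ_i = E₁ + ⋯ + E_i where (E_i)_{i≥1} are i.i.d. rate-1 exponential random variables. Then each expectation E[Γ_i^{−1/α}] is finite for integers i > 1/α, and there exist a constant C > 0 and m₀ ∈ ℕ such that for all m ≥ m₀, ∑_{i>m} E[Γ_i^{−1/α}] ≤ C·m^{1−1/α}. -/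
open MeasureTheory ProbabilityTheory Finset Real

open scoped ENNReal

section AuxStmt15

private lemma aux_ae_pos {Ω : Type*} [MeasurableSpace Ω] {P : Measure Ω} {X : Ω → ℝ}
    (hX : Measurable X) (h : Measure.map X P = expMeasure 1) : ∀ᵐ ω ∂P, 0 < X ω := by
  have h0 : expMeasure 1 (Set.Iic 0) = 0 := by
    rw [expMeasure, gammaMeasure, withDensity_apply _ measurableSet_Iic,
      setLIntegral_congr (Filter.EventuallyEq.symm Iio_ae_eq_Iic)]
    exact lintegral_gammaPDF_of_nonpos le_rfl
  have hP : P (X ⁻¹' Set.Iic 0) = 0 := by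
    rw [← Measure.map_apply hX measurableSet_Iic, h]; exact h0
  rw [ae_iff]
  convert hP using 2
  ext ω
  simp [not_lt]

private lemma aux_lintegral_rpow_expMeasure {q : ℝ} (hq0 : 0 < q) (hq1 : q < 1) :
    ∫⁻ x, ENNReal.ofReal (x ^ (-q)) ∂(expMeasure 1)
      = ENNReal.ofReal (Real.Gamma (1 - q)) := by
  have hmg : Measurable fun x : ℝ => ENNReal.ofReal (x ^ (-q)) := by measurability
  rw [expMeasure, gammaMeasure,
    lintegral_withDensity_eq_lintegral_mul _ (show Measurable (gammaPDF 1 1) from (measurable_gammaPDFReal 1 1).ennreal_ofReal) hmg]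
  have hsplit : ∀ x : ℝ, (gammaPDF 1 1 * fun x => ENNReal.ofReal (x ^ (-q))) x
      = Set.indicator (Set.Ioi (0:ℝ)) (fun x => ENNReal.ofReal (Real.exp (-x) * x ^ (-q))) x := by
    intro x
    rcases lt_trichotomy x 0 with hx | hx | hx
    · simp [Set.indicator_of_notMem (by simpa using hx.le.not_gt : x ∉ Set.Ioi (0:ℝ)),
        gammaPDF_of_neg hx]
    · subst hx
      simp [Real.zero_rpow (neg_ne_zero.2 hq0.ne')]
    · rw [Set.indicator_of_mem (Set.mem_Ioi.2 hx)]
      simp only [Pi.mul_apply]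
      rw [gammaPDF_eq, if_pos hx.le]
      rw [← ENNReal.ofReal_mul (by positivity)]
      congr 1
      rw [Real.Gamma_one]
      simp [Real.rpow_one, sub_self, Real.rpow_zero]
  simp_rw [hsplit]
  rw [lintegral_indicator measurableSet_Ioi]
  have hint : IntegrableOn (fun x : ℝ => Real.exp (-x) * x ^ ((1 - q) - 1)) (Set.Ioi 0) :=
    Real.GammaIntegral_convergent (by linarith)
  have hint' : IntegrableOn (fun x : ℝ => Real.exp (-x) * x ^ (-q)) (Set.Ioi 0) := by
    have : (1 - q) - 1 = -q := by ring
    rwa [this] at hint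
  rw [← ofReal_integral_eq_lintegral_ofReal hint'
      ((ae_restrict_iff' measurableSet_Ioi).2 (Filter.Eventually.of_forall fun x hx => mul_nonneg (Real.exp_nonneg _) (Real.rpow_nonneg (le_of_lt hx) _)))]
  congr 1
  rw [Real.Gamma_eq_integral (by linarith : (0:ℝ) < 1 - q)]
  congr 1
  ext x
  congr 1
  ring

private lemma aux_Gamma_le {x : ℝ} (hx0 : 0 < x) (hx : x ≤ 1 / 2) :
    Real.Gamma (1 - x) ≤ Real.pi ^ x := by
  have hmem : (1/2 : ℝ) ∈ Set.Ioi (0:ℝ) := by norm_num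
  have hmem1 : (1 : ℝ) ∈ Set.Ioi (0:ℝ) := by norm_num
  have hconv := Real.convexOn_log_Gamma.2 hmem hmem1
    (show (0:ℝ) ≤ 2*x by linarith) (show (0:ℝ) ≤ 1 - 2*x by linarith) (by ring)
  have hpt : (2*x) • (1/2 : ℝ) + (1 - 2*x) • (1:ℝ) = 1 - x := by
    simp [smul_eq_mul]; ring
  rw [hpt] at hconv
  simp only [Function.comp_apply, smul_eq_mul, Real.Gamma_one, Real.log_one, mul_zero,
    add_zero] at hconv
  rw [Real.Gamma_one_half_eq, Real.log_sqrt Real.pi_pos.le] at hconv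
  have hGpos : 0 < Real.Gamma (1 - x) := Real.Gamma_pos_of_pos (by linarith)
  calc Real.Gamma (1 - x) = Real.exp (Real.log (Real.Gamma (1 - x))) :=
        (Real.exp_log hGpos).symm
    _ ≤ Real.exp (x * Real.log Real.pi) := by
        apply Real.exp_le_exp.2
        calc Real.log (Real.Gamma (1 - x)) ≤ 2*x * (Real.log Real.pi / 2) := hconv
          _ = x * Real.log Real.pi := by ring
    _ = Real.pi ^ x := by rw [Real.rpow_def_of_pos Real.pi_pos, mul_comm]

private lemma aux_tail {p : ℝ} (hp : 1 < p) {m : ℕ} (hm : 1 ≤ m) :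
    Summable (fun i : ℕ => ((m : ℝ) + 1 + i) ^ (-p)) ∧
    ∑' i : ℕ, ((m : ℝ) + 1 + i) ^ (-p) ≤ (m : ℝ) ^ (1 - p) / (p - 1) := by
  have hm1 : (1 : ℝ) ≤ (m : ℝ) := by exact_mod_cast hm
  have hterm : ∀ i : ℕ, ((m : ℝ) + 1 + i) ^ (-p)
      ≤ (((m : ℝ) + i) ^ (1 - p) - ((m : ℝ) + 1 + i) ^ (1 - p)) / (p - 1) := by
    intro i
    set a : ℝ := (m : ℝ) + i with ha
    have ha1 : (1 : ℝ) ≤ a := by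
      have : (0:ℝ) ≤ (i:ℝ) := Nat.cast_nonneg i
      linarith
    have hb : (m : ℝ) + 1 + i = a + 1 := by ring
    rw [hb]
    have ha0 : (0:ℝ) < a := by linarith
    have hb0 : (0:ℝ) < a + 1 := by linarith
    -- step 1 : (a+1)^(-p) ≤ ∫ x in a..(a+1), x^(-p)
    have hIntOn : IntegrableOn (fun x : ℝ => x ^ (-p)) (Set.Ioc a (a+1)) := by
      exact (integrableOn_Ioi_rpow_of_lt (by linarith) ha0).mono_set Set.Ioc_subset_Ioi_self
    have h1 : (a + 1) ^ (-p) ≤ ∫ x in a..(a+1), x ^ (-p) := by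
      rw [intervalIntegral.integral_of_le (by linarith)]
      have hconst : ∫ x in Set.Ioc a (a+1), (a+1) ^ (-p) = (a+1) ^ (-p) := by
        rw [setIntegral_const]
        rw [Real.volume_real_Ioc]
        norm_num
      rw [← hconst]
      apply setIntegral_mono_on (integrableOn_const (by simp [Real.volume_Ioc]))
        hIntOn measurableSet_Ioc
      intro x hx
      exact Real.rpow_le_rpow_of_nonpos (lt_of_lt_of_le ha0 hx.1.le) hx.2 (by linarith)
    -- step 2 : compute the integral
    have h2 : ∫ x in a..(a+1), x ^ (-p) = (a ^ (1-p) - (a+1) ^ (1-p)) / (p - 1) := by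
      rw [integral_rpow (Or.inr ⟨by linarith, fun hmem => by
        rcases Set.mem_uIcc.1 hmem with h | h <;> linarith [h.1, h.2]⟩)]
      have h3 : -p + 1 = 1 - p := by ring
      rw [h3]
      rw [div_eq_div_iff (by linarith) (by linarith)]
      ring
    rw [h2] at h1; exact h1
  set g : ℕ → ℝ := fun i => ((m : ℝ) + i) ^ (1 - p) with hg
  have hterm' : ∀ i : ℕ, ((m : ℝ) + 1 + i) ^ (-p) ≤ (g i - g (i+1)) / (p - 1) := by
    intro i
    have : g (i+1) = ((m : ℝ) + 1 + i) ^ (1 - p) := by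
      simp only [hg]
      congr 1
      push_cast
      ring
    rw [this]
    exact hterm i
  have hpos : ∀ i : ℕ, (0:ℝ) ≤ ((m : ℝ) + 1 + i) ^ (-p) := by
    intro i
    apply Real.rpow_nonneg
    positivity
  have hpartial : ∀ n : ℕ, ∑ i ∈ range n, ((m : ℝ) + 1 + i) ^ (-p)
      ≤ (m : ℝ) ^ (1 - p) / (p - 1) := by
    intro n
    calc ∑ i ∈ range n, ((m : ℝ) + 1 + i) ^ (-p)
        ≤ ∑ i ∈ range n, (g i - g (i+1)) / (p - 1) :=
          Finset.sum_le_sum fun i _ => hterm' i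
      _ = (g 0 - g n) / (p - 1) := by
          rw [← Finset.sum_div, Finset.sum_range_sub' g n]
      _ ≤ g 0 / (p - 1) := by
          have hgn : (0:ℝ) ≤ g n := Real.rpow_nonneg (by positivity) _
          gcongr
          · linarith
      _ = (m : ℝ) ^ (1 - p) / (p - 1) := by simp [hg]
  exact ⟨summable_of_sum_range_le hpos hpartial,
    Real.tsum_le_of_sum_range_le hpos hpartial⟩

private lemma aux_lintegral_prod_of_indep {Ω : Type*} [MeasurableSpace Ω] {P : Measure Ω}
    {Y : ℕ → Ω → ℝ≥0∞} (h : iIndepFun Y P)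
    (hY : ∀ j, Measurable (Y j)) (s : Finset ℕ) :
    ∫⁻ ω, ∏ j ∈ s, Y j ω ∂P = ∏ j ∈ s, ∫⁻ ω, Y j ω ∂P := by
  classical
  have : IsProbabilityMeasure P := h.isProbabilityMeasure
  induction s using Finset.induction_on with
  | empty => simp
  | @insert i s hi ih =>
    rw [Finset.prod_insert hi, ← ih]
    simp_rw [Finset.prod_insert hi]
    have hindep : IndepFun (Y i) (fun ω => ∏ j ∈ s, Y j ω) P := by
      have := (h.indepFun_finsetProd_of_notMem hY hi).symm
      simpa [Finset.prod_fn] using this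
    exact lintegral_mul_eq_lintegral_mul_lintegral_of_indepFun''
      (hY i).aemeasurable (Finset.measurable_prod s fun j _ => hY j).aemeasurable hindep

end AuxStmt15

/-- If `Γ_i = E₁ + ⋯ + E_i` with `(E_i)` i.i.d. rate-1 exponential and `α ∈ (0,1)`, then
`E[Γ_i^(−1/α)]` is finite for integers `i > 1/α`, and there are `C > 0` and `m₀` such that
for all `m ≥ m₀`, `∑_{i>m} E[Γ_i^(−1/α)] ≤ C m^(1−1/α)`. -/
theorem stmt_15 {Ω : Type*} [MeasurableSpace Ω] (P : Measure Ω) [IsProbabilityMeasure P]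
    (α : ℝ) (hα : α ∈ Set.Ioo (0 : ℝ) 1)
    (E : ℕ → Ω → ℝ) (hE : ∀ i, Measurable (E i))
    (hindep : iIndepFun E P)
    (hexp : ∀ i, Measure.map (E i) P = expMeasure 1) :
    (∀ i : ℕ, 1 / α < (i : ℝ) →
      Integrable (fun ω => (∑ j ∈ range i, E j ω) ^ (-(1 / α))) P) ∧
    ∃ C : ℝ, 0 < C ∧ ∃ m₀ : ℕ, ∀ m : ℕ, m₀ ≤ m →
      Summable (fun i : ℕ =>
        ∫ ω, (∑ j ∈ range (m + 1 + i), E j ω) ^ (-(1 / α)) ∂P) ∧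
      (∑' i : ℕ, ∫ ω, (∑ j ∈ range (m + 1 + i), E j ω) ^ (-(1 / α)) ∂P)
        ≤ C * (m : ℝ) ^ (1 - 1 / α) := by
  obtain ⟨hα0, hα1⟩ := hα
  set p : ℝ := 1 / α with hpdef
  have hp : 1 < p := by rw [hpdef, lt_div_iff₀ hα0]; linarith
  have hp0 : 0 < p := by linarith
  have hpos : ∀ᵐ ω ∂P, ∀ j, 0 < E j ω := ae_all_iff.2 fun j => aux_ae_pos (hE j) (hexp j)
  -- the key moment estimate
  have key : ∀ i : ℕ, p < (i : ℝ) →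
      Integrable (fun ω => (∑ j ∈ range i, E j ω) ^ (-p)) P ∧
      ∫ ω, (∑ j ∈ range i, E j ω) ^ (-p) ∂P
        ≤ (i : ℝ) ^ (-p) * Real.Gamma (1 - p / i) ^ i := by
    intro i hi
    have hi0 : (0:ℝ) < i := lt_trans hp0 hi
    set q : ℝ := p / i with hq
    have hq0 : 0 < q := div_pos hp0 hi0
    have hq1 : q < 1 := (div_lt_one hi0).2 hi
    have hrm : Measurable fun x : ℝ => ENNReal.ofReal (x ^ (-q)) := by measurability
    set Y : ℕ → Ω → ℝ≥0∞ := fun j ω => ENNReal.ofReal (E j ω ^ (-q)) with hY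
    have hYmeas : ∀ j, Measurable (Y j) := fun j => hrm.comp (hE j)
    have hYindep : iIndepFun Y P :=
      hindep.comp (fun _ x => ENNReal.ofReal (x ^ (-q))) (fun _ => hrm)
    have hYint : ∀ j, ∫⁻ ω, Y j ω ∂P = ENNReal.ofReal (Real.Gamma (1 - q)) := by
      intro j
      calc ∫⁻ ω, ENNReal.ofReal (E j ω ^ (-q)) ∂P
          = ∫⁻ x, ENNReal.ofReal (x ^ (-q)) ∂(Measure.map (E j) P) :=
            (lintegral_map hrm (hE j)).symm
        _ = ENNReal.ofReal (Real.Gamma (1 - q)) := by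
            rw [hexp j]; exact aux_lintegral_rpow_expMeasure hq0 hq1
    have hbound : ∀ᵐ ω ∂P, ENNReal.ofReal ((∑ j ∈ range i, E j ω) ^ (-p))
        ≤ ENNReal.ofReal ((i:ℝ) ^ (-p)) * ∏ j ∈ range i, Y j ω := by
      filter_upwards [hpos] with ω hω
      have hz : ∀ j ∈ range i, (0:ℝ) < E j ω := fun j _ => hω j
      have hw : ∑ _j ∈ range i, (i:ℝ)⁻¹ = 1 := by
        rw [Finset.sum_const, card_range, nsmul_eq_mul, mul_inv_cancel₀ hi0.ne']
      have hgm := Real.geom_mean_le_arith_mean_weighted (range i)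
        (fun _ => (i:ℝ)⁻¹) (fun j => E j ω)
        (fun _ _ => by positivity) hw (fun j hj => (hz j hj).le)
      rw [← Finset.mul_sum] at hgm
      set G : ℝ := ∏ j ∈ range i, E j ω ^ ((i:ℝ)⁻¹) with hG
      have hGpos : 0 < G := Finset.prod_pos fun j hj => Real.rpow_pos_of_pos (hz j hj) _
      have hS : (i:ℝ) * G ≤ ∑ j ∈ range i, E j ω := by
        calc (i:ℝ) * G ≤ (i:ℝ) * ((i:ℝ)⁻¹ * ∑ j ∈ range i, E j ω) :=
              mul_le_mul_of_nonneg_left hgm hi0.le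
          _ = ∑ j ∈ range i, E j ω := by field_simp
      have h1 : (∑ j ∈ range i, E j ω) ^ (-p) ≤ ((i:ℝ) * G) ^ (-p) :=
        Real.rpow_le_rpow_of_nonpos (by positivity) hS (by linarith)
      have h2 : ((i:ℝ) * G) ^ (-p) = (i:ℝ) ^ (-p) * G ^ (-p) :=
        Real.mul_rpow hi0.le hGpos.le
      have h3 : G ^ (-p) = ∏ j ∈ range i, E j ω ^ (-q) := by
        rw [hG, ← Real.finset_prod_rpow (range i) _
          (fun j hj => Real.rpow_nonneg (hz j hj).le _) (-p)]
        refine Finset.prod_congr rfl fun j hj => ?_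
        rw [← Real.rpow_mul (hz j hj).le]
        congr 1
        rw [hq, div_eq_mul_inv]
        ring
      calc ENNReal.ofReal ((∑ j ∈ range i, E j ω) ^ (-p))
          ≤ ENNReal.ofReal ((i:ℝ) ^ (-p) * ∏ j ∈ range i, E j ω ^ (-q)) := by
            apply ENNReal.ofReal_le_ofReal
            rw [← h3, ← h2]; exact h1
        _ = ENNReal.ofReal ((i:ℝ) ^ (-p)) * ∏ j ∈ range i, Y j ω := by
            rw [ENNReal.ofReal_mul (Real.rpow_nonneg hi0.le _),
              ENNReal.ofReal_prod_of_nonneg (fun j _ => Real.rpow_nonneg (hω j).le _)]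
    have hsum_meas : Measurable fun ω => ∑ j ∈ range i, E j ω :=
      Finset.measurable_sum (range i) fun j _ => hE j
    have hrp : Measurable fun x : ℝ => x ^ (-p) := by measurability
    have hfm : Measurable fun ω => (∑ j ∈ range i, E j ω) ^ (-p) := hrp.comp hsum_meas
    have hnn : 0 ≤ᵐ[P] fun ω => (∑ j ∈ range i, E j ω) ^ (-p) := by
      filter_upwards [hpos] with ω hω
      exact Real.rpow_nonneg (Finset.sum_nonneg fun j _ => (hω j).le) _
    have hL : ∫⁻ ω, ENNReal.ofReal ((∑ j ∈ range i, E j ω) ^ (-p)) ∂P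
        ≤ ENNReal.ofReal ((i:ℝ) ^ (-p)) * ENNReal.ofReal (Real.Gamma (1 - q)) ^ i := by
      refine (lintegral_mono_ae hbound).trans_eq ?_
      rw [lintegral_const_mul _ (Finset.measurable_prod (range i) fun j _ => hYmeas j),
        aux_lintegral_prod_of_indep hYindep hYmeas]
      congr 1
      rw [Finset.prod_congr rfl fun j _ => hYint j, Finset.prod_const, card_range]
    have hfin : (ENNReal.ofReal ((i:ℝ) ^ (-p)) * ENNReal.ofReal (Real.Gamma (1 - q)) ^ i) ≠ ⊤ :=
      ENNReal.mul_ne_top ENNReal.ofReal_ne_top (ENNReal.pow_ne_top ENNReal.ofReal_ne_top)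
    have hint : Integrable (fun ω => (∑ j ∈ range i, E j ω) ^ (-p)) P :=
      ⟨hfm.aestronglyMeasurable,
        (hasFiniteIntegral_iff_ofReal hnn).2 (lt_of_le_of_lt hL hfin.lt_top)⟩
    refine ⟨hint, ?_⟩
    rw [integral_eq_lintegral_of_nonneg_ae hnn hfm.aestronglyMeasurable]
    have hmono := ENNReal.toReal_mono hfin hL
    rw [ENNReal.toReal_mul, ENNReal.toReal_pow,
      ENNReal.toReal_ofReal (Real.rpow_nonneg hi0.le _),
      ENNReal.toReal_ofReal (Real.Gamma_pos_of_pos (by linarith : (0:ℝ) < 1 - q)).le] at hmono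
    exact hmono
  constructor
  · intro i hi
    exact (key i hi).1
  · set m₀ : ℕ := ⌈2*p⌉₊ + 1 with hm₀
    have hm₀p : 2*p ≤ (m₀:ℝ) := by
      have := Nat.le_ceil (2*p)
      rw [hm₀]
      push_cast
      linarith
    have hm₀1 : 1 ≤ m₀ := Nat.succ_le_succ (Nat.zero_le _)
    refine ⟨Real.pi ^ p / (p - 1), div_pos (Real.rpow_pos_of_pos Real.pi_pos _) (by linarith), m₀, fun m hm => ?_⟩
    have hm1 : 1 ≤ m := le_trans hm₀1 hm
    have hmp : 2*p ≤ (m:ℝ) := le_trans hm₀p (by exact_mod_cast hm)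
    have hidx : ∀ i : ℕ, p < ((m+1+i : ℕ) : ℝ) := by
      intro i
      push_cast
      have h0 : (0:ℝ) ≤ (i:ℝ) := Nat.cast_nonneg i
      linarith
    have hgb : ∀ i : ℕ, (((m+1+i : ℕ) : ℝ)) ^ (-p) * Real.Gamma (1 - p / ((m+1+i : ℕ) : ℝ)) ^ (m+1+i)
        ≤ Real.pi ^ p * ((m:ℝ) + 1 + i) ^ (-p) := by
      intro i
      set n : ℕ := m + 1 + i with hn
      have hn0 : (0:ℝ) < (n:ℝ) := lt_trans hp0 (hidx i)
      have hcast : ((n:ℕ) : ℝ) = (m:ℝ) + 1 + i := by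
        simp only [hn, Nat.cast_add, Nat.cast_one]
      have hnp : 2*p ≤ (n:ℝ) := by
        have h0 : (0:ℝ) ≤ (i:ℝ) := Nat.cast_nonneg i
        rw [hcast]
        linarith
      have hx0 : 0 < p / (n:ℝ) := div_pos hp0 hn0
      have hx : p / (n:ℝ) ≤ 1/2 := by
        rw [div_le_iff₀ hn0]
        linarith
      have hΓ := aux_Gamma_le hx0 hx
      have hΓn : Real.Gamma (1 - p / (n:ℝ)) ^ n ≤ (Real.pi ^ (p / (n:ℝ))) ^ n :=
        pow_le_pow_left₀ (Real.Gamma_pos_of_pos (by linarith)).le hΓ n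
      have hpin : (Real.pi ^ (p / (n:ℝ))) ^ n = Real.pi ^ p := by
        rw [← Real.rpow_natCast (Real.pi ^ (p / (n:ℝ))) n, ← Real.rpow_mul Real.pi_pos.le,
          div_mul_cancel₀ _ hn0.ne']
      calc ((n:ℕ) : ℝ) ^ (-p) * Real.Gamma (1 - p / ((n:ℕ) : ℝ)) ^ n
          ≤ ((n:ℕ) : ℝ) ^ (-p) * Real.pi ^ p := by
            apply mul_le_mul_of_nonneg_left _ (Real.rpow_nonneg hn0.le _)
            rw [← hpin]; exact hΓn
        _ = Real.pi ^ p * ((m:ℝ) + 1 + i) ^ (-p) := by rw [hcast]; ring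
    have hterm : ∀ i : ℕ, ∫ ω, (∑ j ∈ range (m+1+i), E j ω) ^ (-p) ∂P
        ≤ Real.pi ^ p * ((m:ℝ) + 1 + i) ^ (-p) :=
      fun i => le_trans (key _ (hidx i)).2 (hgb i)
    have hnn : ∀ i : ℕ, 0 ≤ ∫ ω, (∑ j ∈ range (m+1+i), E j ω) ^ (-p) ∂P := by
      intro i
      apply integral_nonneg_of_ae
      filter_upwards [hpos] with ω hω
      exact Real.rpow_nonneg (Finset.sum_nonneg fun j _ => (hω j).le) _
    obtain ⟨hsum, htsum⟩ := aux_tail hp hm1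
    have hsum' : Summable fun i : ℕ => Real.pi ^ p * ((m:ℝ) + 1 + i) ^ (-p) := hsum.mul_left _
    have hsummable : Summable fun i : ℕ => ∫ ω, (∑ j ∈ range (m+1+i), E j ω) ^ (-p) ∂P :=
      Summable.of_nonneg_of_le hnn hterm hsum'
    refine ⟨hsummable, ?_⟩
    calc ∑' i : ℕ, ∫ ω, (∑ j ∈ range (m+1+i), E j ω) ^ (-p) ∂P
        ≤ ∑' i : ℕ, Real.pi ^ p * ((m:ℝ) + 1 + i) ^ (-p) :=
          hsummable.tsum_le_tsum hterm hsum'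
      _ = Real.pi ^ p * ∑' i : ℕ, ((m:ℝ) + 1 + i) ^ (-p) := tsum_mul_left
      _ ≤ Real.pi ^ p * ((m:ℝ) ^ (1-p) / (p-1)) := by
          apply mul_le_mul_of_nonneg_left htsum (by positivity)
      _ = (Real.pi ^ p / (p-1)) * (m:ℝ) ^ (1-p) := by ring
end

section
/- Let (Ω, F, P) be a probability space, T : Ω → Ω a measure-preserving map, X₀ : Ω → [0,∞) measurable with P(X₀ > x) > 0 for every x ∈ ℝ, and X_k = X₀ ∘ T^k for k ≥ 1. Suppose that for every integer j ≥ 1 the limit p_j := lim_{x→∞} P(X₁ ≤ x, …, X_j ≤ x | X₀ > x) exists, and set p₀ = 1. Then for every integer d ≥ 1, lim_{x→∞} P(max_{1≤k≤d} X_k > x) / P(X₀ > x) = ∑_{j=0}^{d−1} p_j. -/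
open MeasureTheory Filter Finset

private lemma key_eq {Ω : Type*} [MeasurableSpace Ω] (P : Measure Ω) [IsProbabilityMeasure P]
    (T : Ω → Ω) (hT : MeasurePreserving T P P)
    (X₀ : Ω → ℝ) (hX₀ : Measurable X₀) (x : ℝ) :
    ∀ d : ℕ, P {ω | ∃ k : ℕ, 1 ≤ k ∧ k ≤ d ∧ X₀ (T^[k] ω) > x}
      = ∑ m ∈ range d, P {ω | (∀ k : ℕ, 1 ≤ k → k ≤ m → X₀ (T^[k] ω) ≤ x) ∧ X₀ ω > x} := by
  have hTm : Measurable T := hT.measurable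
  have hXk : ∀ k : ℕ, Measurable fun ω => X₀ (T^[k] ω) := fun k => hX₀.comp (hTm.iterate k)
  have hAmeas : ∀ d : ℕ, MeasurableSet {ω | ∃ k : ℕ, 1 ≤ k ∧ k ≤ d ∧ X₀ (T^[k] ω) > x} := by
    intro d
    have h : {ω | ∃ k : ℕ, 1 ≤ k ∧ k ≤ d ∧ X₀ (T^[k] ω) > x}
        = ⋃ k ∈ Finset.Icc 1 d, {ω | X₀ (T^[k] ω) > x} := by
      ext ω
      simp [Finset.mem_Icc, and_assoc]
    rw [h]
    exact Finset.measurableSet_biUnion _ fun k _ => measurableSet_lt measurable_const (hXk k)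
  have hCmeas : ∀ m : ℕ,
      MeasurableSet {ω | (∀ k : ℕ, 1 ≤ k → k ≤ m → X₀ (T^[k] ω) ≤ x) ∧ X₀ ω > x} := by
    intro m
    have h : {ω | (∀ k : ℕ, 1 ≤ k → k ≤ m → X₀ (T^[k] ω) ≤ x) ∧ X₀ ω > x}
        = (⋂ k ∈ Finset.Icc 1 m, {ω | X₀ (T^[k] ω) ≤ x}) ∩ {ω | X₀ ω > x} := by
      ext ω
      constructor
      · rintro ⟨hall, h⟩
        exact ⟨Set.mem_iInter₂.mpr fun k hk =>
          hall k (Finset.mem_Icc.mp hk).1 (Finset.mem_Icc.mp hk).2, h⟩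
      · rintro ⟨hall, h⟩
        exact ⟨fun k h1 h2 => Set.mem_iInter₂.mp hall k (Finset.mem_Icc.mpr ⟨h1, h2⟩), h⟩
    rw [h]
    exact ((Finset.measurableSet_biInter _ fun k _ =>
      measurableSet_le (hXk k) measurable_const)).inter
      (measurableSet_lt measurable_const hX₀)
  intro d
  induction d with
  | zero =>
      have h : {ω | ∃ k : ℕ, 1 ≤ k ∧ k ≤ 0 ∧ X₀ (T^[k] ω) > x} = (∅ : Set Ω) := by
        ext ω
        simp only [Set.mem_setOf_eq, Set.mem_empty_iff_false, iff_false]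
        rintro ⟨k, h1, h2, -⟩
        omega
      simp only [range_zero, sum_empty]
      rw [h, measure_empty]
  | succ d ih =>
      -- decomposition of the event for d+1
      have h1 : {ω | ∃ k : ℕ, 1 ≤ k ∧ k ≤ d + 1 ∧ X₀ (T^[k] ω) > x}
          = {ω | X₀ (T ω) > x} ∪
            T ⁻¹' ({ω | ¬ X₀ ω > x} ∩ {ω | ∃ k : ℕ, 1 ≤ k ∧ k ≤ d ∧ X₀ (T^[k] ω) > x}) := by
        ext ω
        simp only [Set.mem_setOf_eq, Set.mem_union, Set.mem_preimage, Set.mem_inter_iff]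
        constructor
        · rintro ⟨k, hk1, hk2, hk⟩
          by_cases h : X₀ (T ω) > x
          · exact Or.inl h
          · right
            refine ⟨h, k - 1, ?_, ?_, ?_⟩
            · -- k ≠ 1 since T^[1] ω = T ω
              rcases Nat.eq_or_lt_of_le hk1 with h' | h'
              · exfalso; apply h; rw [← h'] at hk; simpa using hk
              · omega
            · omega
            · have hk' : k - 1 + 1 = k := by
                rcases Nat.eq_or_lt_of_le hk1 with h' | h'
                · exfalso; apply h; rw [← h'] at hk; simpa using hk
                · omega
              rwa [← hk', Function.iterate_succ_apply] at hk
        · rintro (h | ⟨-, k, hk1, hk2, hk⟩)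
          · exact ⟨1, le_refl 1, by omega, by simpa using h⟩
          · exact ⟨k + 1, by omega, by omega, by
              rw [Function.iterate_succ_apply]; exact hk⟩
      have hdisj1 : Disjoint {ω | X₀ (T ω) > x}
          (T ⁻¹' ({ω | ¬ X₀ ω > x} ∩ {ω | ∃ k : ℕ, 1 ≤ k ∧ k ≤ d ∧ X₀ (T^[k] ω) > x})) := by
        rw [Set.disjoint_left]
        intro ω h hmem
        exact hmem.1 h
      have hm2 : MeasurableSet ({ω | ¬ X₀ ω > x} ∩
          {ω | ∃ k : ℕ, 1 ≤ k ∧ k ≤ d ∧ X₀ (T^[k] ω) > x}) :=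
        ((measurableSet_lt measurable_const hX₀).compl).inter (hAmeas d)
      have e1 : P {ω | ∃ k : ℕ, 1 ≤ k ∧ k ≤ d + 1 ∧ X₀ (T^[k] ω) > x}
          = P {ω | X₀ (T ω) > x}
            + P ({ω | ¬ X₀ ω > x} ∩ {ω | ∃ k : ℕ, 1 ≤ k ∧ k ≤ d ∧ X₀ (T^[k] ω) > x}) := by
        rw [h1, measure_union hdisj1 (hTm hm2), hT.measure_preimage hm2.nullMeasurableSet]
      have e2 : P {ω | X₀ (T ω) > x} = P {ω | X₀ ω > x} := by
        have : {ω | X₀ (T ω) > x} = T ⁻¹' {ω | X₀ ω > x} := rfl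
        rw [this, hT.measure_preimage (measurableSet_lt measurable_const hX₀).nullMeasurableSet]
      -- split {X₀ > x} into the part meeting A_d and C_d
      have h3 : {ω | X₀ ω > x}
          = ({ω | X₀ ω > x} ∩ {ω | ∃ k : ℕ, 1 ≤ k ∧ k ≤ d ∧ X₀ (T^[k] ω) > x})
            ∪ {ω | (∀ k : ℕ, 1 ≤ k → k ≤ d → X₀ (T^[k] ω) ≤ x) ∧ X₀ ω > x} := by
        ext ω
        simp only [Set.mem_setOf_eq, Set.mem_union, Set.mem_inter_iff]
        constructor
        · intro h
          by_cases hA : ∃ k : ℕ, 1 ≤ k ∧ k ≤ d ∧ X₀ (T^[k] ω) > x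
          · exact Or.inl ⟨h, hA⟩
          · push_neg at hA
            exact Or.inr ⟨fun k h1 h2 => hA k h1 h2, h⟩
        · rintro (⟨h, -⟩ | ⟨-, h⟩) <;> exact h
      have hdisj3 : Disjoint
          ({ω | X₀ ω > x} ∩ {ω | ∃ k : ℕ, 1 ≤ k ∧ k ≤ d ∧ X₀ (T^[k] ω) > x})
          {ω | (∀ k : ℕ, 1 ≤ k → k ≤ d → X₀ (T^[k] ω) ≤ x) ∧ X₀ ω > x} := by
        rw [Set.disjoint_left]
        rintro ω ⟨-, k, hk1, hk2, hk⟩ ⟨hall, -⟩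
        exact absurd hk (not_lt.mpr (hall k hk1 hk2))
      have e3 : P {ω | X₀ ω > x}
          = P ({ω | X₀ ω > x} ∩ {ω | ∃ k : ℕ, 1 ≤ k ∧ k ≤ d ∧ X₀ (T^[k] ω) > x})
            + P {ω | (∀ k : ℕ, 1 ≤ k → k ≤ d → X₀ (T^[k] ω) ≤ x) ∧ X₀ ω > x} := by
        rw [← measure_union hdisj3 (hCmeas d), ← h3]
      -- split A_d by whether X₀ > x
      have h4 : {ω | ∃ k : ℕ, 1 ≤ k ∧ k ≤ d ∧ X₀ (T^[k] ω) > x}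
          = ({ω | X₀ ω > x} ∩ {ω | ∃ k : ℕ, 1 ≤ k ∧ k ≤ d ∧ X₀ (T^[k] ω) > x})
            ∪ ({ω | ¬ X₀ ω > x} ∩ {ω | ∃ k : ℕ, 1 ≤ k ∧ k ≤ d ∧ X₀ (T^[k] ω) > x}) := by
        ext ω
        simp only [Set.mem_setOf_eq, Set.mem_union, Set.mem_inter_iff]
        constructor
        · intro hA
          by_cases h : X₀ ω > x
          · exact Or.inl ⟨h, hA⟩
          · exact Or.inr ⟨h, hA⟩
        · rintro (⟨-, hA⟩ | ⟨-, hA⟩) <;> exact hA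
      have hdisj4 : Disjoint
          ({ω | X₀ ω > x} ∩ {ω | ∃ k : ℕ, 1 ≤ k ∧ k ≤ d ∧ X₀ (T^[k] ω) > x})
          ({ω | ¬ X₀ ω > x} ∩ {ω | ∃ k : ℕ, 1 ≤ k ∧ k ≤ d ∧ X₀ (T^[k] ω) > x}) := by
        rw [Set.disjoint_left]
        rintro ω ⟨h, -⟩ ⟨h', -⟩
        exact h' h
      have e4 : P {ω | ∃ k : ℕ, 1 ≤ k ∧ k ≤ d ∧ X₀ (T^[k] ω) > x}
          = P ({ω | X₀ ω > x} ∩ {ω | ∃ k : ℕ, 1 ≤ k ∧ k ≤ d ∧ X₀ (T^[k] ω) > x})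
            + P ({ω | ¬ X₀ ω > x} ∩ {ω | ∃ k : ℕ, 1 ≤ k ∧ k ≤ d ∧ X₀ (T^[k] ω) > x}) := by
        rw [← measure_union hdisj4 hm2, ← h4]
      rw [Finset.sum_range_succ, ← ih, e1, e2, e3, e4]
      ring

/-- Fixed-block-size extremal asymptotics: for a stationary nonnegative sequence
`X_k = X₀ ∘ T^k` with `P(X₀ > x) > 0` for all `x`, if for each `j ≥ 1` the limit
`p_j = lim_{x→∞} P(X₁ ≤ x, …, X_j ≤ x ∣ X₀ > x)` exists and `p₀ = 1`, then for every
`d ≥ 1`, `P(max_{1≤k≤d} X_k > x) / P(X₀ > x) → ∑_{j=0}^{d−1} p_j` as `x → ∞`. -/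
theorem stmt_19 {Ω : Type*} [MeasurableSpace Ω] (P : Measure Ω) [IsProbabilityMeasure P]
    (T : Ω → Ω) (hT : MeasurePreserving T P P)
    (X₀ : Ω → ℝ) (hX₀ : Measurable X₀) (hX₀nonneg : ∀ ω, 0 ≤ X₀ ω)
    (hX₀tail : ∀ x : ℝ, 0 < P {ω | X₀ ω > x})
    (p : ℕ → ℝ) (hp0 : p 0 = 1)
    (hp : ∀ j : ℕ, 1 ≤ j →
      Tendsto (fun x : ℝ =>
          (P {ω | (∀ k : ℕ, 1 ≤ k → k ≤ j → X₀ (T^[k] ω) ≤ x) ∧ X₀ ω > x}).toReal /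
            (P {ω | X₀ ω > x}).toReal)
        atTop (nhds (p j)))
    (d : ℕ) (hd : 1 ≤ d) :
    Tendsto (fun x : ℝ =>
        (P {ω | ∃ k : ℕ, 1 ≤ k ∧ k ≤ d ∧ X₀ (T^[k] ω) > x}).toReal /
          (P {ω | X₀ ω > x}).toReal)
      atTop (nhds (∑ j ∈ range d, p j)) := by
  have hfun : ∀ x : ℝ,
      (P {ω | ∃ k : ℕ, 1 ≤ k ∧ k ≤ d ∧ X₀ (T^[k] ω) > x}).toReal /
          (P {ω | X₀ ω > x}).toReal
      = ∑ m ∈ range d,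
          (P {ω | (∀ k : ℕ, 1 ≤ k → k ≤ m → X₀ (T^[k] ω) ≤ x) ∧ X₀ ω > x}).toReal /
            (P {ω | X₀ ω > x}).toReal := by
    intro x
    rw [key_eq P T hT X₀ hX₀ x d, ENNReal.toReal_sum (fun m _ => measure_ne_top P _),
      Finset.sum_div]
  have hsum : Tendsto (fun x : ℝ => ∑ m ∈ range d,
      (P {ω | (∀ k : ℕ, 1 ≤ k → k ≤ m → X₀ (T^[k] ω) ≤ x) ∧ X₀ ω > x}).toReal /
        (P {ω | X₀ ω > x}).toReal) atTop (nhds (∑ j ∈ range d, p j)) := by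
    apply tendsto_finset_sum
    intro m _
    rcases Nat.eq_zero_or_pos m with hm | hm
    · subst hm
      have hC0 : ∀ x : ℝ,
          {ω | (∀ k : ℕ, 1 ≤ k → k ≤ 0 → X₀ (T^[k] ω) ≤ x) ∧ X₀ ω > x} = {ω | X₀ ω > x} := by
        intro x
        ext ω
        simp only [Set.mem_setOf_eq, and_iff_right_iff_imp]
        intro _ k h1 h2
        omega
      have hone : ∀ x : ℝ,
          (P {ω | (∀ k : ℕ, 1 ≤ k → k ≤ 0 → X₀ (T^[k] ω) ≤ x) ∧ X₀ ω > x}).toReal /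
            (P {ω | X₀ ω > x}).toReal = 1 := by
        intro x
        rw [hC0 x]
        exact div_self (ENNReal.toReal_pos (hX₀tail x).ne' (measure_ne_top P _)).ne'
      rw [hp0]
      exact Tendsto.congr (fun x => (hone x).symm) tendsto_const_nhds
    · exact hp m hm
  exact Tendsto.congr (fun x => (hfun x).symm) hsum
end
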